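/- arXiv:1311.7690 — 3 statements merged into one kernel-verified Lean document; each statement's English description precedes it below -/
import Mathlib

section
/- For any two fixed-point-free involutions f and g on a set of size 2n, the disjoint cycles of the product f∘g have lengths that come in pairs: there exists a partition λ of n such that the cycle type of f∘g is (λ₁,λ₁,λ₂,λ₂,…,λ_k,λ_k). -/
/-- The full cycle type of a permutation: the usual cycle type (cycles of
length ≥ 2) together with one part `1` for each fixed point. -/
def fullCycleType {α : Type*} [Fintype α] [DecidableEq α] (f : Equiv.Perm α) : Multiset ℕ :=
  f.cycleType + Multiset.replicate (Finset.univ.filter fun x => f x = x).card 1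

private lemma even_card_of_invol {α : Type*} [DecidableEq α] (i : α → α) :
    ∀ S : Finset α, (∀ a ∈ S, i a ∈ S) → (∀ a ∈ S, i (i a) = a) → (∀ a ∈ S, i a ≠ a) →
    Even S.card := by
  intro S
  induction S using Finset.strongInduction with
  | _ S ih =>
    intro h1 h2 h3
    rcases S.eq_empty_or_nonempty with rfl | ⟨a, ha⟩
    · simp
    · have hia : i a ∈ S := h1 a ha
      have hne : i a ≠ a := h3 a ha
      set T := (S.erase a).erase (i a) with hTdef
      have hsub : T ⊂ S :=
        lt_of_le_of_lt (Finset.erase_subset _ _) (Finset.erase_ssubset ha)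
      have hmemT : ∀ b, b ∈ T ↔ b ∈ S ∧ b ≠ a ∧ b ≠ i a := by
        intro b
        simp only [hTdef, Finset.mem_erase]
        tauto
      have hEvenT : Even T.card := by
        apply ih T hsub
        · intro b hb
          rw [hmemT] at hb ⊢
          obtain ⟨hbS, hba, hbia⟩ := hb
          refine ⟨h1 b hbS, ?_, ?_⟩
          · intro h; apply hbia; rw [← h2 b hbS, h]
          · intro h; apply hba
            have := congrArg i h
            rwa [h2 b hbS, h2 a ha] at this
        · intro b hb; exact h2 b ((hmemT b).mp hb).1
        · intro b hb; exact h3 b ((hmemT b).mp hb).1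
      have hcard : T.card = S.card - 2 := by
        rw [hTdef, Finset.card_erase_of_mem, Finset.card_erase_of_mem ha]
        · omega
        · exact Finset.mem_erase.mpr ⟨hne, hia⟩
      have h2le : 2 ≤ S.card := by
        have : ({i a, a} : Finset α) ⊆ S := by
          intro b hb
          rcases Finset.mem_insert.mp hb with rfl | hb
          · exact hia
          · rwa [Finset.mem_singleton.mp hb]
        calc 2 = ({i a, a} : Finset α).card := by rw [Finset.card_insert_of_notMem (by simpa using hne), Finset.card_singleton]
          _ ≤ S.card := Finset.card_le_card this
      obtain ⟨r, hr⟩ := hEvenT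
      exact ⟨r + 1, by omega⟩

private lemma multiset_double :
    ∀ M : Multiset ℕ, (∀ a, Even (M.count a)) → ∃ N : Multiset ℕ, M = N + N := by
  intro M
  induction M using Multiset.strongInductionOn with
  | _ M ih =>
    intro h
    rcases M.empty_or_exists_mem with rfl | ⟨a, ha⟩
    · exact ⟨0, rfl⟩
    · have h2 : 2 ≤ M.count a := by
        obtain ⟨r, hr⟩ := h a
        have := Multiset.count_pos.mpr ha
        omega
      have ha' : a ∈ M.erase a := by
        rw [← Multiset.count_pos, Multiset.count_erase_self]
        omega
      set M' := (M.erase a).erase a with hM'def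
      have hM : M = a ::ₘ a ::ₘ M' := by
        rw [hM'def, Multiset.cons_erase ha', Multiset.cons_erase ha]
      have hlt : M' < M :=
        lt_of_le_of_lt (Multiset.erase_le _ _) (Multiset.erase_lt.mpr ha)
      have hcounts : ∀ b, Even (M'.count b) := by
        intro b
        rcases eq_or_ne b a with rfl | hb
        · rw [hM'def, Multiset.count_erase_self, Multiset.count_erase_self]
          obtain ⟨r, hr⟩ := h b
          exact ⟨r - 1, by omega⟩
        · rw [hM'def, Multiset.count_erase_of_ne hb, Multiset.count_erase_of_ne hb]
          exact h b
      obtain ⟨N, hN⟩ := ih M' hlt hcounts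
      refine ⟨a ::ₘ N, ?_⟩
      rw [hM, hN]
      simp [Multiset.cons_add, Multiset.add_cons]

private lemma inv_mem_cff {α : Type*} [Fintype α] [DecidableEq α] {σ c : Equiv.Perm α}
    (h : c ∈ σ.cycleFactorsFinset) : c⁻¹ ∈ σ⁻¹.cycleFactorsFinset := by
  rw [Equiv.Perm.mem_cycleFactorsFinset_iff] at h ⊢
  obtain ⟨hc, hsupp⟩ := h
  refine ⟨hc.inv, ?_⟩
  intro x hx
  rw [Equiv.Perm.support_inv] at hx
  have hx' : c⁻¹ x ∈ c.support := by
    rw [← Equiv.Perm.support_inv, Equiv.Perm.apply_mem_support, Equiv.Perm.support_inv]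
    exact hx
  have h1 : c (c⁻¹ x) = σ (c⁻¹ x) := hsupp _ hx'
  rw [show c (c⁻¹ x) = x from c.apply_symm_apply x] at h1
  symm
  rw [Equiv.Perm.inv_eq_iff_eq]
  exact h1

/-- For any two fixed-point-free involutions `f`, `g` on a set of size `2n`, the cycle
lengths of `f * g` come in pairs: the (full) cycle type of `f * g` is `λλ` for some
partition `λ` of `n`. -/
theorem stmt_0 (n : ℕ) (f g : Equiv.Perm (Fin (2 * n)))
    (hf : f * f = 1) (hf' : ∀ x, f x ≠ x)
    (hg : g * g = 1) (hg' : ∀ x, g x ≠ x) :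
    ∃ M : Multiset ℕ, M.sum = n ∧ fullCycleType (f * g) = M + M := by
  set σ := f * g with hσ
  have hfinv : f⁻¹ = f := inv_eq_of_mul_eq_one_right hf
  have hginv : g⁻¹ = g := inv_eq_of_mul_eq_one_right hg
  have key : f * σ * f⁻¹ = σ⁻¹ := by
    rw [hσ, hfinv, mul_inv_rev, hfinv, hginv]
    have : f * (f * g) * f = f * f * (g * f) := by group
    rw [this, hf, one_mul]
  have hffz : ∀ z, f (f z) = z := fun z => by
    have := congrArg (fun p => p z) hf; simpa using this
  have key2 : f * σ⁻¹ * f⁻¹ = σ := by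
    have h := congrArg Inv.inv key
    simpa [mul_inv_rev, hfinv, mul_assoc] using h
  have hcommfσ : f * σ = σ⁻¹ * f := by
    rw [← key]; group
  have hconj : ∀ x : Equiv.Perm (Fin (2 * n)), f * (f * x * f⁻¹) * f⁻¹ = x := by
    intro x
    have : f * (f * x * f⁻¹) * f⁻¹ = (f * f) * x * (f * f)⁻¹ := by group
    rw [this, hf]
    simp
  -- the involution on cycle factors
  set φ : Equiv.Perm (Fin (2 * n)) → Equiv.Perm (Fin (2 * n)) := fun c => f * c⁻¹ * f⁻¹ with hφ
  have hφmem : ∀ c ∈ σ.cycleFactorsFinset, φ c ∈ σ.cycleFactorsFinset := by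
    intro c hc
    have h1 : c⁻¹ ∈ σ⁻¹.cycleFactorsFinset := inv_mem_cff hc
    have h2 := (Equiv.Perm.mem_cycleFactorsFinset_conj σ⁻¹ f c⁻¹).mpr h1
    rwa [key2] at h2
  have hφinvol : ∀ c, φ (φ c) = c := by
    intro c
    show f * (f * c⁻¹ * f⁻¹)⁻¹ * f⁻¹ = c
    have : (f * c⁻¹ * f⁻¹)⁻¹ = f * c * f⁻¹ := by group
    rw [this, hconj]
  have hφcard : ∀ c, ((φ c).support).card = c.support.card := by
    intro c
    show ((f * c⁻¹ * f⁻¹).support).card = _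
    rw [Equiv.Perm.card_support_conj, Equiv.Perm.support_inv]
  have hφne : ∀ c ∈ σ.cycleFactorsFinset, φ c ≠ c := by
    intro c hcS hfix
    simp only [hφ] at hfix
    have hconjc : f * c * f⁻¹ = c⁻¹ := by
      have h := congrArg Inv.inv hfix
      rwa [show (f * c⁻¹ * f⁻¹)⁻¹ = f * c * f⁻¹ from by group] at h
    have hconj' : ∀ t : ℤ, f * c ^ t = c ^ (-t) * f := by
      intro t
      have h1 : (f * c * f⁻¹) ^ t = f * c ^ t * f⁻¹ := conj_zpow
      rw [hconjc] at h1
      have h2 : f * c ^ t = (c⁻¹) ^ t * f := by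
        rw [h1]; group
      rw [h2, inv_zpow, zpow_neg]
    obtain ⟨hc, hsupp⟩ := Equiv.Perm.mem_cycleFactorsFinset_iff.mp hcS
    obtain ⟨x, hx1, -⟩ := id hc
    have hfx : c (f x) ≠ f x := by
      intro hEq
      have h3 : f (c x) = c⁻¹ (f x) := by
        have := congrArg (fun p => p (f x)) hconjc
        simpa using this
      have h4 : c⁻¹ (f x) = f x := by
        rw [Equiv.Perm.inv_eq_iff_eq, hEq]
      rw [h4] at h3
      exact hx1 (f.injective h3)
    obtain ⟨k, hk⟩ := hc.exists_pow_eq hx1 hfx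
    have hfct : ∀ t : ℤ, f ((c ^ t) x) = (c ^ ((k : ℤ) - t)) x := by
      intro t
      have h1 : f ((c ^ t) x) = (f * c ^ t) x := rfl
      rw [h1, hconj' t]
      have h2 : (c ^ (-t) * f) x = (c ^ (-t)) (f x) := rfl
      rw [h2, ← hk, ← zpow_natCast c k]
      have h3 : (c ^ (-t)) ((c ^ (k : ℤ)) x) = (c ^ (-t) * c ^ (k : ℤ)) x := rfl
      rw [h3, ← zpow_add]
      congr 2
      ring
    rcases Nat.even_or_odd k with ⟨t, ht⟩ | ⟨t, ht⟩
    · apply hf' ((c ^ (t : ℤ)) x)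
      rw [hfct]
      congr 2
      omega
    · -- k = 2 * t + 1 : find a fixed point of g
      have hgfσ : g = f * σ := by
        rw [hσ, ← mul_assoc, hf, one_mul]
      set y := (c ^ (t : ℤ)) x with hy
      have hysupp : y ∈ c.support := by
        rw [hy, Equiv.Perm.zpow_apply_mem_support, Equiv.Perm.mem_support]
        exact hx1
      apply hg' y
      rw [hgfσ]
      have h5 : (f * σ) y = f (σ y) := rfl
      rw [h5, ← hsupp y hysupp]
      have h6 : c y = (c ^ ((1 : ℤ) + t)) x := by
        rw [zpow_add, zpow_one, Equiv.Perm.mul_apply]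
      rw [h6, hfct]
      have h7 : (k : ℤ) - (1 + t) = t := by omega
      rw [h7]
  -- evenness of counts in the cycle type
  have hcount : ∀ ℓ : ℕ, Even (σ.cycleType.count ℓ) := by
    intro ℓ
    rw [Equiv.Perm.cycleType_def, Multiset.count_map]
    have heq : Multiset.card (Multiset.filter (fun c => ℓ = (Finset.card ∘ Equiv.Perm.support) c) σ.cycleFactorsFinset.1)
        = (σ.cycleFactorsFinset.filter (fun c => ℓ = (Finset.card ∘ Equiv.Perm.support) c)).card := rfl
    rw [heq]
    apply even_card_of_invol φ
    · intro c hcmem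
      rw [Finset.mem_filter] at hcmem ⊢
      exact ⟨hφmem c hcmem.1, by simpa [Function.comp, hφcard c] using hcmem.2⟩
    · intro c _; exact hφinvol c
    · intro c hcmem
      exact hφne c (Finset.mem_filter.mp hcmem).1
  -- evenness of the number of fixed points
  have hfixcount : Even (Finset.univ.filter fun x => σ x = x).card := by
    apply even_card_of_invol f
    · intro x hx
      rw [Finset.mem_filter] at hx ⊢
      refine ⟨Finset.mem_univ _, ?_⟩
      have h1 : f (σ x) = σ⁻¹ (f x) := by
        have := congrArg (fun p => p x) hcommfσ
        simpa using this
      rw [hx.2] at h1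
      have := congrArg σ h1
      rwa [show σ (σ⁻¹ (f x)) = f x from σ.apply_symm_apply (f x)] at this
    · intro x _
      exact hffz x
    · intro x _; exact hf' x
  have hall : ∀ a, Even ((fullCycleType σ).count a) := by
    intro a
    rw [fullCycleType, Multiset.count_add, Multiset.count_replicate]
    apply (hcount a).add
    split
    · exact hfixcount
    · exact Even.zero
  obtain ⟨N, hN⟩ := multiset_double _ hall
  have hsum : (fullCycleType σ).sum = 2 * n := by
    rw [fullCycleType, Multiset.sum_add, Multiset.sum_replicate, smul_eq_mul, mul_one,
      Equiv.Perm.sum_cycleType]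
    have hcompl : (Finset.univ.filter fun x => σ x = x) = σ.supportᶜ := by
      ext x
      simp [Equiv.Perm.mem_support]
    rw [hcompl, Finset.card_compl]
    have h1 : σ.support.card ≤ Fintype.card (Fin (2 * n)) := Finset.card_le_univ _
    rw [Fintype.card_fin] at h1 ⊢
    omega
  refine ⟨N, ?_, hN⟩
  have h2 : N.sum + N.sum = 2 * n := by
    rw [← Multiset.sum_add, ← hN, hsum]
  omega
end

section
/- Let f₁ = (1 n̂)(2 1̂)⋯(n n−1̂), f₂ = (1 1̂)(2 2̂)⋯(n n̂), and let f₃ be any perfect pairing of [n] ∪ [n̂]. For a block structure as in the paper's partitioned hypermaps, consider the directed graph on blocks where a block B₂ of a partition π₂ (stable under f₂ and f₃) points to the block B₁ of a partition π₁ (stable under f₁ and f₃) containing the maximum hat element of B₂, and a block B₁ of π₁ not containing 1 points to the block B₂ of π₂ containing the maximum non-hat element of B₁. Then if a block B₂ of π₂ with maximum hat element m ≠ n̂ is a descendant of a block B₁ of π₁, and B₂' is the block of π₂ that is the ascendant of B₁ (i.e., B₂' contains the maximum non-hat element of B₁), then the maximum hat element of B₂' is strictly larger than m. -/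
/-- Setting: the ground set `[n] ∪ [n̂]` is `Fin n ⊕ Fin n` (zero-indexed; element `i+1`
is `Sum.inl i` and `(i+1)̂` is `Sum.inr i`).  `f₁` is the pairing `i ↔ (i−1)̂`
(cyclically), `f₂` is the swap of the two copies, and `f₃` is any perfect pairing.
`π₁` is stable under `f₁, f₃` and `π₂` under `f₂, f₃`.  If a block `B₂` of `π₂` with
maximum hat element `m̂ ≠ n̂` is a descendant of a block `B₁` of `π₁` (i.e. `m̂ ∈ B₁`),
and `B₂'` is the block of `π₂` containing the maximum non-hat element of `B₁`, then the
maximum hat element of `B₂'` is strictly larger than `m̂`. -/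
theorem stmt_10 (n : ℕ) [NeZero n] (f₁ f₃ : Equiv.Perm (Fin n ⊕ Fin n))
    (h₁ : ∀ i : Fin n, f₁ (Sum.inl i) = Sum.inr (i - 1)) (h₁inv : f₁ * f₁ = 1)
    (h₃inv : f₃ * f₃ = 1) (h₃fpf : ∀ x, f₃ x ≠ x)
    (π₁ π₂ : Finpartition (Finset.univ : Finset (Fin n ⊕ Fin n)))
    (hπ₁ : ∀ B ∈ π₁.parts, ∀ x ∈ B, f₁ x ∈ B ∧ f₃ x ∈ B)
    (hπ₂ : ∀ B ∈ π₂.parts, ∀ x ∈ B,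
      (Equiv.sumComm (Fin n) (Fin n) : Equiv.Perm (Fin n ⊕ Fin n)) x ∈ B ∧ f₃ x ∈ B)
    (B₁ : Finset (Fin n ⊕ Fin n)) (hB₁ : B₁ ∈ π₁.parts)
    (B₂ : Finset (Fin n ⊕ Fin n)) (hB₂ : B₂ ∈ π₂.parts)
    (B₂' : Finset (Fin n ⊕ Fin n)) (hB₂' : B₂' ∈ π₂.parts)
    (m : Fin n) (hm : Sum.inr m ∈ B₂) (hmmax : ∀ j, Sum.inr j ∈ B₂ → j ≤ m)
    (hmn : (m : ℕ) + 1 ≠ n)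
    (hdesc : Sum.inr m ∈ B₁)
    (w : Fin n) (hw : Sum.inl w ∈ B₁) (hwmax : ∀ i, Sum.inl i ∈ B₁ → i ≤ w)
    (hasc : Sum.inl w ∈ B₂')
    (m' : Fin n) (hm' : Sum.inr m' ∈ B₂') (hm'max : ∀ j, Sum.inr j ∈ B₂' → j ≤ m') :
    m < m' := by
  have hlt : (m : ℕ) + 1 < n := lt_of_le_of_ne m.isLt hmn
  set k : Fin n := ⟨(m : ℕ) + 1, hlt⟩ with hk
  have hk1 : f₁ (Sum.inl k) = Sum.inr m := by
    rw [h₁]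
    congr 1
    ext
    rw [Fin.sub_def]
    have hn2 : 2 ≤ n := by omega
    have : (1 : Fin n).val = 1 := by
      simp [Fin.val_one', Nat.mod_eq_of_lt hn2]
    simp only [hk, this]
    have : n - 1 + ((m : ℕ) + 1) = (m : ℕ) + n := by omega
    rw [this, Nat.add_mod_right, Nat.mod_eq_of_lt m.isLt]
  have hk2 : f₁ (Sum.inr m) = Sum.inl k := by
    have := congrArg f₁ hk1
    have h11 : f₁ (f₁ (Sum.inl k)) = Sum.inl k := by
      have := congrFun (congrArg (fun g => g.toFun) h₁inv) (Sum.inl k)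
      simpa using this
    rw [hk1] at h11
    exact h11
  have hkB : Sum.inl k ∈ B₁ := by
    have := (hπ₁ B₁ hB₁ (Sum.inr m) hdesc).1
    rwa [hk2] at this
  have hkw : k ≤ w := hwmax k hkB
  have hwB : Sum.inr w ∈ B₂' := by
    have := (hπ₂ B₂' hB₂' (Sum.inl w) hasc).1
    simpa using this
  have hwm' : w ≤ m' := hm'max w hwB
  have : m < k := by
    simp [hk, Fin.lt_def]
  exact lt_of_lt_of_le this (le_trans hkw hwm')
end

section
/- The ascendant/descendant relation on the blocks of a partitioned locally orientable hypermap (a black block descends from the white block containing its maximum half-edge label, a white block not containing 1 descends from the black block containing its maximum half-edge label) defines a tree structure rooted at the white block containing the label 1. -/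
/-- The ascendant/descendant relation on the blocks of a partitioned locally orientable
hypermap `(f₃, π₁, π₂)` defines a tree structure rooted at the white block containing
the label `1`.  Here the ground set `[n] ∪ [n̂]` is `Fin n ⊕ Fin n` (zero-indexed, so
label `1` is `Sum.inl 0`), `f₁` is the pairing `i ↔ (i−1)̂` (cyclically), `f₂` is the
swap of the two copies, `f₃` is a perfect pairing, `π₁` (white blocks) is stable under
`f₁, f₃` and `π₂` (black blocks) is stable under `f₂, f₃`.  The parent of a black block
is the white block containing its maximum hat element; the parent of a white block not
containing `1` is the black block containing its maximum non-hat element.  Iterating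
the parent map from any block reaches the root. -/
theorem stmt_11 (n : ℕ) [NeZero n] (f₁ f₃ : Equiv.Perm (Fin n ⊕ Fin n))
    (h₁ : ∀ i : Fin n, f₁ (Sum.inl i) = Sum.inr (i - 1)) (h₁inv : f₁ * f₁ = 1)
    (h₃inv : f₃ * f₃ = 1) (h₃fpf : ∀ x, f₃ x ≠ x)
    (π₁ π₂ : Finpartition (Finset.univ : Finset (Fin n ⊕ Fin n)))
    (hπ₁ : ∀ B ∈ π₁.parts, ∀ x ∈ B, f₁ x ∈ B ∧ f₃ x ∈ B)
    (hπ₂ : ∀ B ∈ π₂.parts, ∀ x ∈ B,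
      (Equiv.sumComm (Fin n) (Fin n) : Equiv.Perm (Fin n ⊕ Fin n)) x ∈ B ∧ f₃ x ∈ B)
    (R : Finset (Fin n ⊕ Fin n)) (hR : R ∈ π₁.parts) (hR0 : Sum.inl 0 ∈ R)
    (parent : ({B // B ∈ π₁.parts} ⊕ {B // B ∈ π₂.parts}) →
      ({B // B ∈ π₁.parts} ⊕ {B // B ∈ π₂.parts}))
    (hparentB : ∀ b : {B // B ∈ π₂.parts}, ∃ (w : {B // B ∈ π₁.parts}) (m : Fin n),
      Sum.inr m ∈ b.val ∧ (∀ j, Sum.inr j ∈ b.val → j ≤ m) ∧ Sum.inr m ∈ w.val ∧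
        parent (Sum.inr b) = Sum.inl w)
    (hparentW : ∀ w : {B // B ∈ π₁.parts}, Sum.inl 0 ∉ w.val →
      ∃ (b : {B // B ∈ π₂.parts}) (m : Fin n),
        Sum.inl m ∈ w.val ∧ (∀ i, Sum.inl i ∈ w.val → i ≤ m) ∧ Sum.inl m ∈ b.val ∧
          parent (Sum.inl w) = Sum.inr b) :
    ∀ v, ∃ k : ℕ, parent^[k] v = Sum.inl ⟨R, hR⟩ := by
  classical
  have npos : 0 < n := Nat.pos_of_ne_zero (NeZero.ne n)
  have hf₁inv : ∀ x, f₁ (f₁ x) = x := by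
    intro x
    have h : (f₁ * f₁) x = x := by rw [h₁inv]; rfl
    simpa [Equiv.Perm.mul_apply] using h
  have hf₁r : ∀ j : Fin n, f₁ (Sum.inr j) = Sum.inl (j + 1) := by
    intro j
    have e : f₁ (Sum.inl (j + 1)) = Sum.inr j := by
      rw [h₁]; congr 1; exact add_sub_cancel_right j 1
    rw [← e, hf₁inv]
  set g : (Fin n ⊕ Fin n) → ℕ := Sum.elim (fun i => i.val) (fun _ => 0) with hg
  set gr : (Fin n ⊕ Fin n) → ℕ := Sum.elim (fun _ => 0) (fun j => j.val) with hgr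
  set μ : ({B // B ∈ π₁.parts} ⊕ {B // B ∈ π₂.parts}) → ℕ :=
    fun v => Sum.elim (fun w => 2 * (n - (w.val.sup g))) (fun b => 2 * (n - 1 - (b.val.sup gr)) + 1) v with hμ
  suffices key : ∀ N, ∀ v, μ v = N → ∃ k : ℕ, parent^[k] v = Sum.inl ⟨R, hR⟩ by
    intro v; exact key (μ v) v rfl
  intro N
  induction N using Nat.strong_induction_on with
  | _ N IH =>
    rintro (w | b) hv
    · by_cases h0 : Sum.inl (0 : Fin n) ∈ w.val
      · have hw : w = ⟨R, hR⟩ := Subtype.ext (π₁.eq_of_mem_parts w.2 hR h0 hR0)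
        exact ⟨0, by simp [hw]⟩
      · obtain ⟨b, m, hmw, hmax, hmb, hp⟩ := hparentW w h0
        have hrm : Sum.inr m ∈ b.val := by
          have h := (hπ₂ b.val b.2 _ hmb).1
          simpa using h
        have hsupw : w.val.sup g = m.val := by
          apply le_antisymm
          · apply Finset.sup_le
            rintro (i | j) hx
            · exact Fin.le_iff_val_le_val.mp (hmax i hx)
            · exact Nat.zero_le _
          · exact Finset.le_sup (f := g) hmw
        have hsupb : m.val ≤ b.val.sup gr := Finset.le_sup (f := gr) hrm
        have hmlt : m.val < n := m.isLt
        have hlt : μ (Sum.inr b) < N := by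
          rw [← hv]; simp only [hμ, Sum.elim_inl, Sum.elim_inr, hsupw]
          omega
        obtain ⟨k, hk⟩ := IH _ hlt (Sum.inr b) rfl
        exact ⟨k + 1, by rw [Function.iterate_succ_apply, hp, hk]⟩
    · obtain ⟨w, m, hmb, hmax, hmw, hp⟩ := hparentB b
      have hlw : Sum.inl (m + 1) ∈ w.val := by
        have h := (hπ₁ w.val w.2 _ hmw).1
        rwa [hf₁r] at h
      by_cases hm : m.val = n - 1
      · have hm1 : (m + 1 : Fin n) = 0 := by
          apply Fin.ext
          rw [Fin.add_def]
          have h1 : (1 : Fin n).val = 1 % n := Fin.val_one' n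
          simp only [h1, Fin.val_zero]
          rcases eq_or_lt_of_le (show 1 ≤ n from npos) with h | h
          · have hn : n = 1 := h.symm
            subst hn
            simp
          · rw [Nat.mod_eq_of_lt h, hm, Nat.sub_add_cancel npos, Nat.mod_self]
        rw [hm1] at hlw
        have hw : w = ⟨R, hR⟩ := Subtype.ext (π₁.eq_of_mem_parts w.2 hR hlw hR0)
        exact ⟨1, by simp [hp, hw]⟩
      · have hmlt : m.val < n := m.isLt
        have hval : ((m + 1 : Fin n)).val = m.val + 1 := by
          rw [Fin.add_def]
          have h1 : (1 : Fin n).val = 1 % n := Fin.val_one' n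
          simp only [h1]
          have h2 : 1 < n := by omega
          rw [Nat.mod_eq_of_lt h2]
          exact Nat.mod_eq_of_lt (by omega)
        have hsupb : b.val.sup gr = m.val := by
          apply le_antisymm
          · apply Finset.sup_le
            rintro (i | j) hx
            · exact Nat.zero_le _
            · exact Fin.le_iff_val_le_val.mp (hmax j hx)
          · exact Finset.le_sup (f := gr) hmb
        have hsupw : m.val + 1 ≤ w.val.sup g := by
          have h := Finset.le_sup (f := g) hlw
          simpa [hg, hval] using h
        have hlt : μ (Sum.inl w) < N := by
          rw [← hv]; simp only [hμ, Sum.elim_inl, Sum.elim_inr, hsupb]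
          omega
        obtain ⟨k, hk⟩ := IH _ hlt (Sum.inl w) rfl
        exact ⟨k + 1, by rw [Function.iterate_succ_apply, hp, hk]⟩
end
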